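/- Let (M,·) be a moving semigroup and let A ⊆ M. Then A is DIP if and only if there exists a nonprincipal idempotent ultrafilter 𝓤 on M with A ∈ 𝓤. -/

import Mathlib

open Filter FirstOrder FirstOrder.Language

attribute [local instance] Ultrafilter.mul

/-! ## Combinatorial notions in a semigroup -/

/-- `X` is an IP set: it contains `FP u` (all finite products, in increasing order of indices,
of distinct terms) of some sequence `u`. -/
def IsIP {M : Type*} [Semigroup M] (X : Set M) : Prop :=
  ∃ u : Stream' M, Hindman.FP u ⊆ X

/-- `X` is IIP (infinitely IP): it contains an infinite set of the form `FP u`. -/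
def IsIIP {M : Type*} [Semigroup M] (X : Set M) : Prop :=
  ∃ u : Stream' M, Hindman.FP u ⊆ X ∧ (Hindman.FP u).Infinite

/-- `X` is DIP (distinctly IP): it contains `FP u` for an injective sequence `u`. -/
def IsDIP {M : Type*} [Semigroup M] (X : Set M) : Prop :=
  ∃ u : Stream' M, Function.Injective u ∧ Hindman.FP u ⊆ X

/-- An ultrafilter is nonprincipal if it is not of the form `{A | a ∈ A}` for any `a`. -/
def Ultrafilter.Nonprincipal {M : Type*} (U : Ultrafilter M) : Prop :=
  ∀ a : M, U ≠ pure a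

/-- A semigroup is moving if the product of two nonprincipal ultrafilters
(for the ultrafilter product `A ∈ U * V ↔ {m | {n | m * n ∈ A} ∈ V} ∈ U`) is nonprincipal. -/
def IsMoving (M : Type*) [Semigroup M] : Prop :=
  ∀ U V : Ultrafilter M, U.Nonprincipal → V.Nonprincipal → (U * V).Nonprincipal

/-! ## Types over a semigroup structure -/

/-- Formulas in one free variable, with parameters from `M`. -/
abbrev Form1 (L : Language) (M : Type*) := L.Formula (M ⊕ Fin 1)

/-- Formulas in two free variables (`x` and `y`), with parameters from `M`. -/
abbrev Form2 (L : Language) (M : Type*) := L.Formula (M ⊕ Fin 2)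

/-- Realization of a 1-variable formula with parameters at the point `a`. -/
def Realize1 {L : Language} {M : Type*} (S : L.Structure M) (φ : Form1 L M) (a : M) : Prop :=
  @Formula.Realize L M S _ φ (Sum.elim id fun _ => a)

/-- Realization of a 2-variable formula with parameters at the pair `(a, b)`. -/
def Realize2 {L : Language} {M : Type*} (S : L.Structure M) (φ : Form2 L M) (a b : M) : Prop :=
  @Formula.Realize L M S _ φ (Sum.elim id ![a, b])

/-- A complete 1-type over the structure `S` (with parameters for all elements of `M`):
a complete, finitely satisfiable (in `S`) set of formulas in one free variable. -/
def IsCompleteType1 {L : Language} {M : Type*} (S : L.Structure M)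
    (p : Set (Form1 L M)) : Prop :=
  (∀ φ : Form1 L M, φ ∈ p ↔ φ.not ∉ p) ∧
    ∀ s : Finset (Form1 L M), ↑s ⊆ p → ∃ a : M, ∀ φ ∈ s, Realize1 S φ a

/-- A complete 2-type over the structure `S` (with parameters for all elements of `M`). -/
def IsCompleteType2 {L : Language} {M : Type*} (S : L.Structure M)
    (q : Set (Form2 L M)) : Prop :=
  (∀ φ : Form2 L M, φ ∈ q ↔ φ.not ∉ q) ∧
    ∀ s : Finset (Form2 L M), ↑s ⊆ q → ∃ a b : M, ∀ φ ∈ s, Realize2 S φ a b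

/-- `substX u φ` is `φ(u, y)`: the element `u` is substituted for the variable `x`. -/
def substX {L : Language} {M : Type*} (u : M) (φ : Form2 L M) : Form2 L M :=
  φ.subst (Sum.elim (fun m => Term.var (Sum.inl m))
    ![Term.var (Sum.inl u), Term.var (Sum.inr 1)])

/-- A 2-type `q(x, y)` is independent if for every `φ(x, y) ∈ q` there is `u ∈ M` with
`φ(u, y) ∈ q`. -/
def IsIndependent {L : Language} {M : Type*} (q : Set (Form2 L M)) : Prop :=
  ∀ φ ∈ q, ∃ u : M, substX u φ ∈ q

/-- `toX φ` views the 1-variable formula `φ` as a 2-variable formula `φ(x)`. -/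
def toX {L : Language} {M : Type*} (φ : Form1 L M) : Form2 L M :=
  φ.subst (Sum.elim (fun m => Term.var (Sum.inl m)) fun _ => Term.var (Sum.inr 0))

/-- `toY φ` views the 1-variable formula `φ` as a 2-variable formula `φ(y)`. -/
def toY {L : Language} {M : Type*} (φ : Form1 L M) : Form2 L M :=
  φ.subst (Sum.elim (fun m => Term.var (Sum.inl m)) fun _ => Term.var (Sum.inr 1))

/-- `toXY f φ` is `φ(x · y)`, where `f` is the distinguished binary function symbol. -/
def toXY {L : Language} {M : Type*} (f : L.Functions 2) (φ : Form1 L M) : Form2 L M :=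
  φ.subst (Sum.elim (fun m => Term.var (Sum.inl m))
    fun _ => Term.func f ![Term.var (Sum.inr 0), Term.var (Sum.inr 1)])

/-- A complete 1-type `p` over `S` is idempotent (with respect to the binary function symbol `f`
interpreted as the semigroup operation) if there is an independent complete 2-type `q(x, y)` with
`p(x) ⊆ q`, `p(y) ⊆ q` and `p(x · y) ⊆ q`. -/
def IsIdempotentType {L : Language} {M : Type*} (S : L.Structure M) (f : L.Functions 2)
    (p : Set (Form1 L M)) : Prop :=
  IsCompleteType1 S p ∧
    ∃ q : Set (Form2 L M), IsCompleteType2 S q ∧ IsIndependent q ∧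
      (∀ φ ∈ p, toX φ ∈ q) ∧ (∀ φ ∈ p, toY φ ∈ q) ∧ (∀ φ ∈ p, toXY f φ ∈ q)

/-- A 1-type over `S` is principal if it is realized by an element of `M`. -/
def IsPrincipalType {L : Language} {M : Type*} (S : L.Structure M)
    (p : Set (Form1 L M)) : Prop :=
  ∃ a : M, ∀ φ ∈ p, Realize1 S φ a

/-! ## Auxiliary lemmas -/

theorem Ultrafilter.nonprincipal_iff' {M : Type*} (U : Ultrafilter M) :
    U.Nonprincipal ↔ ∀ a : M, ({a}ᶜ : Set M) ∈ U := by
  constructor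
  · intro h a
    rw [Ultrafilter.compl_mem_iff_notMem]
    intro hmem
    obtain ⟨x, hx, hU⟩ := Ultrafilter.eq_pure_of_finite_mem (Set.finite_singleton a) hmem
    exact h x hU
  · intro h a hU
    have := h a
    rw [hU] at this
    simp at this

/-- Galvin–Glazer argument with injectivity: any member of a nonprincipal idempotent
ultrafilter contains `FP u` for an injective `u`. -/
theorem exists_injective_FP_of_idempotent {M : Type*} [Semigroup M] (U : Ultrafilter M)
    (hnp : U.Nonprincipal) (hU : U * U = U) {A : Set M} (hA : A ∈ U) :
    ∃ u : Stream' M, Function.Injective u ∧ Hindman.FP u ⊆ A := by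
  classical
  have key : ∀ p : { s : Set M // s ∈ U },
      (p.1 ∩ { m | ∀ᶠ m' in (U : Filter M), m * m' ∈ p.1 }).Nonempty := by
    rintro ⟨s, hs⟩
    exact Ultrafilter.nonempty_of_mem (inter_mem hs (by rwa [← hU] at hs))
  let elem : { s : Set M // s ∈ U } → M := fun p => (key p).some
  have elem_mem : ∀ p, elem p ∈ p.1 := fun p => (key p).some_mem.1
  have elem_ev : ∀ p, ∀ᶠ m' in (U : Filter M), elem p * m' ∈ p.1 :=
    fun p => (key p).some_mem.2
  let succ : { s : Set M // s ∈ U } → { s : Set M // s ∈ U } := fun p =>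
    ⟨p.1 ∩ { m | elem p * m ∈ p.1 } ∩ {elem p}ᶜ,
      inter_mem (inter_mem p.2 (elem_ev p)) ((Ultrafilter.nonprincipal_iff' U).mp hnp (elem p))⟩
  let state : ℕ → { s : Set M // s ∈ U } := fun n => succ^[n] ⟨A, hA⟩
  have state_succ : ∀ n, state (n + 1) = succ (state n) := fun n =>
    Function.iterate_succ_apply' succ n _
  have succ_sub : ∀ p, (succ p).1 ⊆ p.1 := fun p =>
    (Set.inter_subset_left.trans Set.inter_subset_left)
  have mono : ∀ n m : ℕ, n ≤ m → (state m).1 ⊆ (state n).1 := by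
    intro n m hnm
    induction hnm with
    | refl => exact subset_rfl
    | @step k hk ih =>
      rw [state_succ k]
      exact (succ_sub (state k)).trans ih
  let u : Stream' M := fun n => elem (state n)
  have hu_get : ∀ n, u.get n = elem (state n) := fun _ => rfl
  have hmem_state : ∀ n, u.get n ∈ (state n).1 := fun n => elem_mem (state n)
  refine ⟨u, ?_, ?_⟩
  · -- injectivity
    have hlt : ∀ n m : ℕ, n < m → u.get n ≠ u.get m := by
      intro n m hnm heq
      have h1 : u.get m ∈ (state (n + 1)).1 := mono (n + 1) m hnm (hmem_state m)
      rw [state_succ n] at h1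
      exact h1.2 (by rw [← heq, hu_get n]; exact rfl)
    intro n m h
    rcases lt_trichotomy n m with h' | h' | h'
    · exact absurd h (hlt n m h')
    · exact h'
    · exact absurd h.symm (hlt m n h')
  · -- FP u ⊆ A
    have main : ∀ (b : Stream' M), ∀ m ∈ Hindman.FP b, ∀ n, b = u.drop n →
        m ∈ (state n).1 := by
      intro b m hm
      induction hm with
      | head' a =>
        rintro n rfl
        rw [Stream'.head_drop]
        exact hmem_state n
      | tail' a m' h ih =>
        rintro n rfl
        have ht : (u.drop n).tail = u.drop (n + 1) := by
          rw [Stream'.tail_eq_drop, Stream'.drop_drop, Nat.add_comm]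
        exact mono n (n + 1) (Nat.le_succ n) (ih (n + 1) ht)
      | cons' a m' h ih =>
        rintro n rfl
        have ht : (u.drop n).tail = u.drop (n + 1) := by
          rw [Stream'.tail_eq_drop, Stream'.drop_drop, Nat.add_comm]
        have hm' : m' ∈ (state (n + 1)).1 := ih (n + 1) ht
        rw [state_succ n] at hm'
        have h2 : m' ∈ { m | elem (state n) * m ∈ (state n).1 } := hm'.1.2
        rw [Stream'.head_drop]
        exact h2
    intro m hm
    exact main u m hm 0 (by rw [Stream'.drop_zero])

/-- in a moving semigroup, `A` is DIP iff `A` belongs to some nonprincipal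
idempotent ultrafilter. -/
theorem isDIP_iff_mem_nonprincipal_idempotent {M : Type*} [Semigroup M] (hM : IsMoving M)
    (A : Set M) :
    IsDIP A ↔ ∃ U : Ultrafilter M, U.Nonprincipal ∧ U * U = U ∧ A ∈ U := by
  constructor
  · rintro ⟨u, hu, huA⟩
    letI : Semigroup (Ultrafilter M) := Ultrafilter.semigroup
    -- the seed ultrafilter: an extension of the pushforward of the cofinite filter along `u`
    haveI : (Filter.map u.get (Filter.cofinite : Filter ℕ)).NeBot :=
      Filter.NeBot.map Filter.cofinite_neBot u.get
    set U₀ : Ultrafilter M := Ultrafilter.of (Filter.map u.get Filter.cofinite) with hU₀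
    have hof : (U₀ : Filter M) ≤ Filter.map u.get Filter.cofinite := Ultrafilter.of_le _
    have hU₀np : U₀.Nonprincipal := by
      rw [Ultrafilter.nonprincipal_iff']
      intro a
      apply hof
      rw [Filter.mem_map, Filter.mem_cofinite, Set.preimage_compl, compl_compl]
      have hsub : (u.get ⁻¹' ({a} : Set M)).Subsingleton := by
        intro x hx y hy
        simp only [Set.mem_preimage, Set.mem_singleton_iff] at hx hy
        exact hu (hx.trans hy.symm)
      exact hsub.finite
    have hFP : ∀ n : ℕ, Hindman.FP (u.drop n) ∈ U₀ := by
      intro n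
      apply hof
      rw [Filter.mem_map, Filter.mem_cofinite]
      apply Set.Finite.subset (Set.finite_Iio n)
      intro k hk
      simp only [Set.mem_compl_iff, Set.mem_preimage] at hk
      by_contra hkn
      simp only [Set.mem_Iio, not_lt] at hkn
      apply hk
      have hget : (u.drop n).get (k - n) = u.get k := by
        rw [Stream'.get_drop, Nat.add_sub_of_le hkn]
      rw [← hget]
      exact Hindman.FP.singleton _ _
    -- the compact subsemigroup of nonprincipal ultrafilters containing all FP tails
    set S : Set (Ultrafilter M) :=
      { V | V.Nonprincipal } ∩ ⋂ n : ℕ, { V | Hindman.FP (u.drop n) ∈ V } with hS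
    have hclosed : IsClosed S := by
      apply IsClosed.inter
      · have heq : { V : Ultrafilter M | V.Nonprincipal }
            = ⋂ a : M, { V : Ultrafilter M | ({a}ᶜ : Set M) ∈ V } := by
          ext V
          simp [Ultrafilter.nonprincipal_iff', Set.mem_iInter]
        rw [heq]
        exact isClosed_iInter fun a => ultrafilter_isClosed_basic _
      · exact isClosed_iInter fun n => ultrafilter_isClosed_basic _
    have hmulS : ∀ X ∈ S, ∀ Y ∈ S, X * Y ∈ S := by
      intro X hX Y hY
      refine ⟨hM X Y hX.1 hY.1, Set.mem_iInter.mpr fun n => ?_⟩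
      have hXf := Set.mem_iInter.mp hX.2
      have hYf := Set.mem_iInter.mp hY.2
      have : ∀ᶠ m in (X * Y : Ultrafilter M), m ∈ Hindman.FP (u.drop n) := by
        rw [Ultrafilter.eventually_mul]
        filter_upwards [hXf n] with m hm
        obtain ⟨n', hn'⟩ := Hindman.FP.mul hm
        filter_upwards [hYf (n + n')] with m' hm'
        apply hn'
        simpa only [Stream'.drop_drop] using hm'
      exact this
    obtain ⟨V, hVS, hVidem⟩ := exists_idempotent_in_compact_subsemigroup
      Ultrafilter.continuous_mul_left S ⟨U₀, hU₀np, Set.mem_iInter.mpr hFP⟩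
      hclosed.isCompact hmulS
    refine ⟨V, hVS.1, hVidem, ?_⟩
    have h0 : Hindman.FP (u.drop 0) ∈ V := Set.mem_iInter.mp hVS.2 0
    rw [Stream'.drop_zero] at h0
    exact Filter.mem_of_superset h0 huA
  · rintro ⟨U, hnp, hidem, hA⟩
    exact exists_injective_FP_of_idempotent U hnp hidem hA
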